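/- Let β ⪯^w α in ℝ₊ⁿ, B̄ a survival function with values in (0,1), ψ a decreasing convex function on [0,1), and A ∈ [1/n,1] a constant. Then A·Σᵢψ(1 − B̄(x)^{βᵢ}) ≤ A·Σᵢψ(1 − B̄(x)^{αᵢ}) for every x; consequently, for any decreasing φ, φ(A·Σᵢψ(1 − B̄(x)^{βᵢ})) ≥ φ(A·Σᵢψ(1 − B̄(x)^{αᵢ})). -/
import Mathlib


/-- Partial sum of the `k` smallest components (via the sorting permutation). -/
noncomputable def psum (n k : ℕ) (a : Fin n → ℝ) : ℝ :=
  ∑ i ∈ Finset.univ.filter (fun i : Fin n => (i : ℕ) < k), a (Tuple.sort a i)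

/-- Abel summation: monotone nonpositive weights against nonnegative partial sums. -/
private lemma abel_nonpos :
    ∀ (n : ℕ) (s d : ℕ → ℝ),
      (∀ i j, i ≤ j → j < n → s i ≤ s j) →
      (∀ i, i < n → s i ≤ 0) →
      (∀ k, k ≤ n → 0 ≤ ∑ i ∈ Finset.range k, d i) →
      ∑ i ∈ Finset.range n, s i * d i ≤ 0 := by
  intro n
  induction n with
  | zero => intro s d _ _ _; simp
  | succ n ih =>
    intro s d hmono hneg hD
    have h1 : ∑ i ∈ Finset.range (n+1), s i * d i
        = ∑ i ∈ Finset.range (n+1), (s i - s n) * d i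
          + s n * ∑ i ∈ Finset.range (n+1), d i := by
      rw [Finset.mul_sum, ← Finset.sum_add_distrib]
      exact Finset.sum_congr rfl fun i _ => by ring
    have h2 : ∑ i ∈ Finset.range (n+1), (s i - s n) * d i
        = ∑ i ∈ Finset.range n, (s i - s n) * d i := by
      rw [Finset.sum_range_succ]; simp
    have h3 : ∑ i ∈ Finset.range n, (s i - s n) * d i ≤ 0 :=
      ih (fun i => s i - s n) d
        (fun i j hij hj => by
          have := hmono i j hij (hj.trans (Nat.lt_succ_self n)); simp; linarith)
        (fun i hi => by
          have := hmono i n (Nat.le_of_lt hi) (Nat.lt_succ_self n); simp; linarith)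
        (fun k hk => hD k (hk.trans (Nat.le_succ n)))
    have h4 : s n * ∑ i ∈ Finset.range (n+1), d i ≤ 0 :=
      mul_nonpos_of_nonpos_of_nonneg (hneg n (Nat.lt_succ_self n)) (hD (n+1) le_rfl)
    rw [h1, h2]; linarith

/-- Core majorization inequality for decreasing convex functions. -/
private lemma key_sum (n : ℕ) (a b : ℕ → ℝ) (f : ℝ → ℝ)
    (hf : ConvexOn ℝ (Set.Ici 0) f) (hanti : AntitoneOn f (Set.Ici 0))
    (hpa : ∀ i, i < n → 0 < a i) (hpb : ∀ i, i < n → 0 < b i)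
    (hbmono : ∀ i j, i ≤ j → j < n → b i ≤ b j)
    (hps : ∀ k, k ≤ n → ∑ i ∈ Finset.range k, a i ≤ ∑ i ∈ Finset.range k, b i) :
    ∑ i ∈ Finset.range n, f (b i) ≤ ∑ i ∈ Finset.range n, f (a i) := by
  classical
  set G : Finset ℝ := insert (1:ℝ)
    (((Finset.range n ×ˢ Finset.range n).filter fun p => b p.1 < a p.2).image
      fun p => a p.2 - b p.1) with hG
  have hGne : G.Nonempty := ⟨1, Finset.mem_insert_self _ _⟩
  set ε := G.min' hGne with hεdef
  have hεpos : 0 < ε := by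
    have hmem : ε ∈ G := G.min'_mem hGne
    rcases Finset.mem_insert.mp hmem with h | h
    · rw [h]; norm_num
    · obtain ⟨p, hp, hpe⟩ := Finset.mem_image.mp h
      have h2 := (Finset.mem_filter.mp hp).2
      rw [← hpe]; linarith
  have hεgap : ∀ i j, i < n → j < n → b i < a j → b i + ε ≤ a j := by
    intro i j hi hj hlt
    have hmem : a j - b i ∈ G := by
      refine Finset.mem_insert_of_mem (Finset.mem_image.mpr ⟨(i, j), ?_, rfl⟩)
      exact Finset.mem_filter.mpr
        ⟨Finset.mem_product.mpr ⟨Finset.mem_range.mpr hi, Finset.mem_range.mpr hj⟩, hlt⟩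
    have := G.min'_le _ hmem
    rw [← hεdef] at this
    linarith
  have hbmem : ∀ i, i < n → b i ∈ Set.Ici (0:ℝ) := fun i h => (hpb i h).le
  have hamem : ∀ i, i < n → a i ∈ Set.Ici (0:ℝ) := fun i h => (hpa i h).le
  have hbemem : ∀ i, i < n → b i + ε ∈ Set.Ici (0:ℝ) := fun i h => by
    have := hpb i h; simp only [Set.mem_Ici]; linarith
  have flip : ∀ u v : ℝ, (f u - f v) / (u - v) = (f v - f u) / (v - u) := by
    intro u v; rw [← neg_sub (f v), ← neg_sub v, neg_div_neg_eq]
  set s : ℕ → ℝ := fun i => (f (b i + ε) - f (b i)) / ε with hsdef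
  have s_mono : ∀ i j, i ≤ j → j < n → s i ≤ s j := by
    intro i j hij hj
    have hi : i < n := lt_of_le_of_lt hij hj
    rcases eq_or_lt_of_le (hbmono i j hij hj) with heq | hlt
    · simp only [hsdef, heq]; exact le_rfl
    · have hne1 : b i + ε ≠ b i := by intro h; linarith [hεpos]
      have hne2 : b j + ε ≠ b i := by intro h; linarith
      have q1 := hf.secant_mono (a := b i) (x := b i + ε) (y := b j + ε)
        (hbmem i hi) (hbemem i hi) (hbemem j hj) hne1 hne2 (by linarith)
      have hne3 : b i ≠ b j + ε := by intro h; linarith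
      have hne4 : b j ≠ b j + ε := by intro h; linarith [hεpos]
      have q2 := hf.secant_mono (a := b j + ε) (x := b i) (y := b j)
        (hbemem j hj) (hbmem i hi) (hbmem j hj) hne3 hne4 (by linarith)
      rw [flip (b i) (b j + ε), flip (b j) (b j + ε)] at q2
      have e1 : b i + ε - b i = ε := by ring
      have e2 : b j + ε - b j = ε := by ring
      rw [e1] at q1
      rw [e2] at q2
      calc s i = (f (b i + ε) - f (b i)) / ε := rfl
        _ ≤ (f (b j + ε) - f (b i)) / (b j + ε - b i) := q1
        _ ≤ (f (b j + ε) - f (b j)) / ε := q2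
        _ = s j := rfl
  have s_neg : ∀ i, i < n → s i ≤ 0 := by
    intro i hi
    have h1 : f (b i + ε) ≤ f (b i) :=
      hanti (hbmem i hi) (hbemem i hi) (by linarith [hεpos])
    have : f (b i + ε) - f (b i) ≤ 0 := by linarith
    exact div_nonpos_of_nonpos_of_nonneg this hεpos.le
  have pw : ∀ i, i < n → f (b i) - f (a i) ≤ s i * (b i - a i) := by
    intro i hi
    rcases lt_trichotomy (a i) (b i) with h | h | h
    · have q := hf.slope_mono_adjacent (x := a i) (y := b i) (z := b i + ε)
        (hamem i hi) (hbemem i hi) h (by linarith [hεpos])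
      have e1 : b i + ε - b i = ε := by ring
      rw [e1] at q
      have hba : 0 < b i - a i := sub_pos.mpr h
      calc f (b i) - f (a i)
          = ((f (b i) - f (a i)) / (b i - a i)) * (b i - a i) :=
            (div_mul_cancel₀ _ hba.ne').symm
        _ ≤ s i * (b i - a i) := mul_le_mul_of_nonneg_right q hba.le
    · rw [h]; simp
    · have hge : b i + ε ≤ a i := hεgap i i hi hi h
      have hne1 : b i + ε ≠ b i := by intro hh; linarith [hεpos]
      have hne2 : a i ≠ b i := by intro hh; linarith
      have q := hf.secant_mono (a := b i) (x := b i + ε) (y := a i)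
        (hbmem i hi) (hbemem i hi) (hamem i hi) hne1 hne2 hge
      have e1 : b i + ε - b i = ε := by ring
      rw [e1] at q
      have hab : 0 < a i - b i := sub_pos.mpr h
      have q2 : s i * (a i - b i) ≤ f (a i) - f (b i) :=
        calc s i * (a i - b i)
            ≤ ((f (a i) - f (b i)) / (a i - b i)) * (a i - b i) :=
              mul_le_mul_of_nonneg_right q hab.le
          _ = f (a i) - f (b i) := div_mul_cancel₀ _ hab.ne'
      have e2 : s i * (b i - a i) = -(s i * (a i - b i)) := by ring
      linarith [q2, e2.ge, e2.le]
  have habel : ∑ i ∈ Finset.range n, s i * (b i - a i) ≤ 0 :=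
    abel_nonpos n s (fun i => b i - a i) s_mono s_neg
      (fun k hk => by
        rw [Finset.sum_sub_distrib]
        linarith [hps k hk])
  have hsum : ∑ i ∈ Finset.range n, (f (b i) - f (a i))
      ≤ ∑ i ∈ Finset.range n, s i * (b i - a i) :=
    Finset.sum_le_sum fun i hi => pw i (Finset.mem_range.mp hi)
  rw [Finset.sum_sub_distrib] at hsum
  linarith

/-- The composed function `t ↦ ψ(1 - c^t)` is convex and antitone on `[0, ∞)`. -/
private lemma comp_convex (ψ : ℝ → ℝ) (hψa : AntitoneOn ψ (Set.Ico 0 1))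
    (hψc : ConvexOn ℝ (Set.Ico 0 1) ψ) (c : ℝ) (hc0 : 0 < c) (hc1 : c < 1) :
    ConvexOn ℝ (Set.Ici (0:ℝ)) (fun t : ℝ => ψ (1 - c ^ t)) ∧
      AntitoneOn (fun t : ℝ => ψ (1 - c ^ t)) (Set.Ici (0:ℝ)) := by
  have hmap : ∀ t : ℝ, t ∈ Set.Ici (0:ℝ) → (1 - c ^ t) ∈ Set.Ico (0:ℝ) 1 := by
    intro t ht
    have h1 : c ^ t ≤ 1 := Real.rpow_le_one hc0.le hc1.le ht
    have h2 : 0 < c ^ t := Real.rpow_pos_of_pos hc0 t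
    exact ⟨by linarith, by linarith⟩
  constructor
  · refine ⟨convex_Ici 0, ?_⟩
    intro x hx y hy μ ν hμ hν hμν
    simp only [smul_eq_mul]
    have hgx := hmap x hx
    have hgy := hmap y hy
    have hpx : 0 < c ^ x := Real.rpow_pos_of_pos hc0 x
    have hpy : 0 < c ^ y := Real.rpow_pos_of_pos hc0 y
    have hmidmem : μ * (1 - c ^ x) + ν * (1 - c ^ y) ∈ Set.Ico (0:ℝ) 1 := by
      constructor
      · have := mul_nonneg hμ hgx.1
        have := mul_nonneg hν hgy.1
        linarith
      · have hm : 0 < min (c ^ x) (c ^ y) := lt_min hpx hpy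
        have h1 : μ * min (c ^ x) (c ^ y) ≤ μ * c ^ x :=
          mul_le_mul_of_nonneg_left (min_le_left _ _) hμ
        have h2 : ν * min (c ^ x) (c ^ y) ≤ ν * c ^ y :=
          mul_le_mul_of_nonneg_left (min_le_right _ _) hν
        have h3 : μ * min (c ^ x) (c ^ y) + ν * min (c ^ x) (c ^ y)
            = min (c ^ x) (c ^ y) := by rw [← add_mul, hμν, one_mul]
        nlinarith [h1, h2, h3, hm]
    have hconc : μ * (1 - c ^ x) + ν * (1 - c ^ y) ≤ 1 - c ^ (μ * x + ν * y) := by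
      have hexp := convexOn_exp.2 (Set.mem_univ (Real.log c * x))
        (Set.mem_univ (Real.log c * y)) hμ hν hμν
      simp only [smul_eq_mul] at hexp
      rw [Real.rpow_def_of_pos hc0, Real.rpow_def_of_pos hc0,
        Real.rpow_def_of_pos hc0]
      have he : Real.log c * (μ * x + ν * y)
          = μ * (Real.log c * x) + ν * (Real.log c * y) := by ring
      rw [he]
      nlinarith [hexp]
    have hxymem : μ * x + ν * y ∈ Set.Ici (0:ℝ) := by
      simp only [Set.mem_Ici] at hx hy ⊢
      nlinarith
    have hmem2 : 1 - c ^ (μ * x + ν * y) ∈ Set.Ico (0:ℝ) 1 := hmap _ hxymem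
    calc ψ (1 - c ^ (μ * x + ν * y))
        ≤ ψ (μ * (1 - c ^ x) + ν * (1 - c ^ y)) := hψa hmidmem hmem2 hconc
      _ ≤ μ * ψ (1 - c ^ x) + ν * ψ (1 - c ^ y) := by
          have := hψc.2 hgx hgy hμ hν hμν
          simpa using this
  · intro x hx y hy hxy
    have h1 : c ^ y ≤ c ^ x :=
      Real.rpow_le_rpow_of_exponent_ge hc0 hc1.le hxy
    exact hψa (hmap x hx) (hmap y hy) (by linarith)

/-- The sorted extension of a tuple to `ℕ`. -/
private noncomputable def sortedExt (n : ℕ) (a : Fin n → ℝ) : ℕ → ℝ :=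
  fun i => if h : i < n then a (Tuple.sort a ⟨i, h⟩) else 0

private lemma psum_eq (n : ℕ) (a : Fin n → ℝ) (k : ℕ) (hk : k ≤ n) :
    psum n k a = ∑ i ∈ Finset.range k, sortedExt n a i := by
  have h1 : (∑ i : Fin n, if (i : ℕ) < k then a (Tuple.sort a i) else 0)
      = ∑ i ∈ Finset.range n, (if i < k then sortedExt n a i else 0) := by
    rw [← Fin.sum_univ_eq_sum_range (fun i => if i < k then sortedExt n a i else 0) n]
    refine Finset.sum_congr rfl fun i _ => ?_
    simp [sortedExt, i.isLt]
  have h2 : ∑ i ∈ Finset.range n, (if i < k then sortedExt n a i else 0)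
      = ∑ i ∈ Finset.range k, sortedExt n a i := by
    rw [← Finset.sum_filter]
    apply Finset.sum_congr _ fun i _ => rfl
    ext i
    simp only [Finset.mem_filter, Finset.mem_range]
    omega
  rw [psum, Finset.sum_filter, h1, h2]

private lemma sum_comp_sortedExt (n : ℕ) (a : Fin n → ℝ) (f : ℝ → ℝ) :
    ∑ i, f (a i) = ∑ i ∈ Finset.range n, f (sortedExt n a i) := by
  rw [← Equiv.sum_comp (Tuple.sort a) (fun i => f (a i))]
  rw [← Fin.sum_univ_eq_sum_range (fun i => f (sortedExt n a i)) n]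
  refine Finset.sum_congr rfl fun i _ => ?_
  simp [sortedExt, i.isLt]

/-- The key inequality chain in the proof of Theorem 3.1: if `β ⪯^w α`,
`B̄` takes values in `(0,1)`, `ψ` is decreasing and convex on `[0,1)`, and
`A ∈ [1/n,1]`, then `A Σ ψ(1-B̄(x)^{βᵢ}) ≤ A Σ ψ(1-B̄(x)^{αᵢ})`, and hence
any decreasing `φ` reverses the inequality. -/
theorem phr_sum_inequality
    (n : ℕ) (α β : Fin n → ℝ)
    (hα : ∀ i, 0 < α i) (hβ : ∀ i, 0 < β i)
    (hmaj : ∀ k ≤ n, psum n k α ≤ psum n k β)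
    (Bbar : ℝ → ℝ) (hB : ∀ x, Bbar x ∈ Set.Ioo (0:ℝ) 1)
    (ψ : ℝ → ℝ)
    (hψanti : AntitoneOn ψ (Set.Ico 0 1))
    (hψconv : ConvexOn ℝ (Set.Ico 0 1) ψ)
    (A : ℝ) (hA : 1 / (n : ℝ) ≤ A ∧ A ≤ 1) :
    ∀ x : ℝ,
      (A * ∑ i, ψ (1 - Bbar x ^ β i) ≤ A * ∑ i, ψ (1 - Bbar x ^ α i)) ∧
        (∀ φ : ℝ → ℝ, Antitone φ →
          φ (A * ∑ i, ψ (1 - Bbar x ^ α i)) ≤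
            φ (A * ∑ i, ψ (1 - Bbar x ^ β i))) := by
  intro x
  obtain ⟨hc0, hc1⟩ := hB x
  obtain ⟨hfconv, hfanti⟩ := comp_convex ψ hψanti hψconv (Bbar x) hc0 hc1
  set f : ℝ → ℝ := fun t => ψ (1 - Bbar x ^ t) with hfdef
  have hposa : ∀ i, i < n → 0 < sortedExt n α i := by
    intro i hi; simp only [sortedExt, dif_pos hi]; exact hα _
  have hposb : ∀ i, i < n → 0 < sortedExt n β i := by
    intro i hi; simp only [sortedExt, dif_pos hi]; exact hβ _
  have hmono : ∀ i j, i ≤ j → j < n → sortedExt n β i ≤ sortedExt n β j := by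
    intro i j hij hj
    have hi : i < n := lt_of_le_of_lt hij hj
    simp only [sortedExt, dif_pos hi, dif_pos hj]
    exact Tuple.monotone_sort β (show (⟨i, hi⟩ : Fin n) ≤ ⟨j, hj⟩ from hij)
  have hps : ∀ k, k ≤ n →
      ∑ i ∈ Finset.range k, sortedExt n α i ≤ ∑ i ∈ Finset.range k, sortedExt n β i := by
    intro k hk
    rw [← psum_eq n α k hk, ← psum_eq n β k hk]
    exact hmaj k hk
  have key : ∑ i ∈ Finset.range n, f (sortedExt n β i)
      ≤ ∑ i ∈ Finset.range n, f (sortedExt n α i) :=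
    key_sum n (sortedExt n α) (sortedExt n β) f hfconv hfanti hposa hposb hmono hps
  have hsum : ∑ i, ψ (1 - Bbar x ^ β i) ≤ ∑ i, ψ (1 - Bbar x ^ α i) := by
    have e1 := sum_comp_sortedExt n α f
    have e2 := sum_comp_sortedExt n β f
    simp only [hfdef] at e1 e2
    rw [e1, e2] at *
    exact key
  have hA0 : 0 ≤ A := le_trans (one_div_nonneg.mpr (Nat.cast_nonneg n)) hA.1
  have hfirst : A * ∑ i, ψ (1 - Bbar x ^ β i) ≤ A * ∑ i, ψ (1 - Bbar x ^ α i) :=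
    mul_le_mul_of_nonneg_left hsum hA0
  exact ⟨hfirst, fun φ hφ => hφ hfirst⟩
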